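/- Let E be the elliptic curve y² = x³ − 22x² + 21x + 1 over ℚ. Then the points (0,1) and (1,1) lie on E and generate a free subgroup of rank 2 of E(ℚ); in particular the Mordell–Weil rank of E(ℚ) is at least 2. -/

import Mathlib

namespace Stmt14

open WeierstrassCurve WeierstrassCurve.Affine WeierstrassCurve.Affine.Point

noncomputable def E : WeierstrassCurve.Affine ℚ :=
  { a₁ := 0, a₂ := -22, a₃ := 0, a₄ := 21, a₆ := 1 }

@[simp] lemma Ea1 : E.a₁ = 0 := rfl
@[simp] lemma Ea2 : E.a₂ = -22 := rfl
@[simp] lemma Ea3 : E.a₃ = 0 := rfl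
@[simp] lemma Ea4 : E.a₄ = 21 := rfl
@[simp] lemma Ea6 : E.a₆ = 1 := rfl

lemma eqn_iff (x y : ℚ) : E.Equation x y ↔ y ^ 2 = x ^ 3 - 22 * x ^ 2 + 21 * x + 1 := by
  rw [WeierstrassCurve.Affine.equation_iff]
  simp only [Ea1, Ea2, Ea3, Ea4, Ea6]
  constructor <;> intro h <;> linear_combination h

lemma negY_eq (x y : ℚ) : E.negY x y = -y := by
  simp [WeierstrassCurve.Affine.negY]

lemma Edelta : E.Δ ≠ 0 := by
  rw [WeierstrassCurve.Δ, WeierstrassCurve.b₂, WeierstrassCurve.b₄, WeierstrassCurve.b₆,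
    WeierstrassCurve.b₈]
  simp only [Ea1, Ea2, Ea3, Ea4, Ea6]
  norm_num

lemma hP : E.Nonsingular 0 1 :=
  (E.equation_iff_nonsingular_of_Δ_ne_zero Edelta).mp (by rw [eqn_iff]; norm_num)

lemma hQ : E.Nonsingular 1 1 :=
  (E.equation_iff_nonsingular_of_Δ_ne_zero Edelta).mp (by rw [eqn_iff]; norm_num)

lemma hR : E.Nonsingular 21 (-1) :=
  (E.equation_iff_nonsingular_of_Δ_ne_zero Edelta).mp (by rw [eqn_iff]; norm_num)


lemma some_eq_some {x₁ y₁ x₂ y₂ : ℚ} (h₁ : E.Nonsingular x₁ y₁) (h₂ : E.Nonsingular x₂ y₂)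
    (hx : x₁ = x₂) (hy : y₁ = y₂) : Point.some _ _ h₁ = Point.some _ _ h₂ := by
  subst hx; subst hy; rfl

noncomputable def P : E.Point := Point.some _ _ hP
noncomputable def Q : E.Point := Point.some _ _ hQ
noncomputable def R : E.Point := Point.some _ _ hR

lemma PQ_eq : P + Q = R := by
  rw [P, Q, R, add_of_X_ne (by norm_num : (0:ℚ) ≠ 1)]
  apply some_eq_some
  · rw [slope_of_X_ne (by norm_num : (0:ℚ) ≠ 1)]
    norm_num [WeierstrassCurve.Affine.addX]
  · rw [WeierstrassCurve.Affine.addY, slope_of_X_ne (by norm_num : (0:ℚ) ≠ 1)]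
    norm_num [WeierstrassCurve.Affine.addX, WeierstrassCurve.Affine.negAddY, negY_eq]

-- the key doubling identity
lemma double_eq {t s x₀ y₀ : ℚ} (h : E.Nonsingular t s) (hs : s ≠ E.negY t s)
    (h₀ : E.Nonsingular x₀ y₀) (heq : Point.some _ _ h + Point.some _ _ h = Point.some _ _ h₀) :
    (3 * t ^ 2 - 44 * t + 21) ^ 2
      = 4 * (t ^ 3 - 22 * t ^ 2 + 21 * t + 1) * (x₀ - 22 + 2 * t) := by
  have hs0 : s ≠ 0 := by
    intro h0; apply hs; rw [negY_eq, h0]; norm_num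
  have hsq : s ^ 2 = t ^ 3 - 22 * t ^ 2 + 21 * t + 1 := (eqn_iff t s).mp h.1
  rw [add_self_of_Y_ne hs] at heq
  injection heq with hx hy
  rw [slope_of_Y_ne rfl hs] at hx
  rw [negY_eq] at hx
  simp only [WeierstrassCurve.Affine.addX, Ea1, Ea2, Ea4] at hx
  have h2s : s + s ≠ 0 := by intro hc; apply hs0; linarith
  field_simp [h2s] at hx
  linear_combination hx + 4 * (x₀ - 22 + 2*t) * hsq


-- generic no-rational-root via reduction mod p
lemma no_rat_root_quartic (c4 c3 c2 c1 c0 : ℤ) (p : ℕ) (hp : 2 ≤ p)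
    (h : ∀ a b : ZMod p,
      (c4 : ZMod p) * a ^ 4 + c3 * a ^ 3 * b + c2 * a ^ 2 * b ^ 2 + c1 * a * b ^ 3
        + c0 * b ^ 4 = 0 → a = 0 ∧ b = 0)
    (t : ℚ) (ht : (c4 : ℚ) * t ^ 4 + c3 * t ^ 3 + c2 * t ^ 2 + c1 * t + c0 = 0) : False := by
  have hd : ((t.den : ℚ)) ≠ 0 := Nat.cast_ne_zero.mpr t.den_nz
  have hn : (t.num : ℚ) = t * t.den := (Rat.mul_den_eq_num t).symm
  have h1 : (c4 : ℚ) * (t.num : ℚ) ^ 4 + c3 * t.num ^ 3 * t.den + c2 * t.num ^ 2 * t.den ^ 2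
      + c1 * t.num * t.den ^ 3 + c0 * t.den ^ 4 = 0 := by
    calc (c4 : ℚ) * (t.num : ℚ) ^ 4 + c3 * t.num ^ 3 * t.den + c2 * t.num ^ 2 * t.den ^ 2
        + c1 * t.num * t.den ^ 3 + c0 * t.den ^ 4
        = ((c4 : ℚ) * t ^ 4 + c3 * t ^ 3 + c2 * t ^ 2 + c1 * t + c0) * (t.den : ℚ) ^ 4 := by
          rw [hn]; ring
      _ = 0 := by rw [ht, zero_mul]
  have h2 : c4 * t.num ^ 4 + c3 * t.num ^ 3 * (t.den : ℤ) + c2 * t.num ^ 2 * (t.den : ℤ) ^ 2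
      + c1 * t.num * (t.den : ℤ) ^ 3 + c0 * (t.den : ℤ) ^ 4 = 0 := by exact_mod_cast h1
  have h3 := congrArg (fun z : ℤ => (z : ZMod p)) h2
  push_cast at h3
  obtain ⟨ha, hb⟩ := h (t.num : ZMod p) (t.den : ZMod p) h3
  have hpn : (p : ℤ) ∣ t.num := (ZMod.intCast_zmod_eq_zero_iff_dvd _ _).mp ha
  have hpd : p ∣ t.den := (ZMod.natCast_eq_zero_iff _ _).mp hb
  have hpn' : p ∣ t.num.natAbs := Int.ofNat_dvd_right.mp (Int.dvd_natAbs.mpr hpn)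
  have h1' : p ∣ 1 := t.reduced ▸ Nat.dvd_gcd hpn' hpd
  exact absurd (Nat.le_of_dvd one_pos h1') (by omega)

lemma no_rat_root_cubic (c3 c2 c1 c0 : ℤ) (p : ℕ) (hp : 2 ≤ p)
    (h : ∀ a b : ZMod p,
      (c3 : ZMod p) * a ^ 3 + c2 * a ^ 2 * b + c1 * a * b ^ 2 + c0 * b ^ 3 = 0 → a = 0 ∧ b = 0)
    (t : ℚ) (ht : (c3 : ℚ) * t ^ 3 + c2 * t ^ 2 + c1 * t + c0 = 0) : False := by
  have hd : ((t.den : ℚ)) ≠ 0 := Nat.cast_ne_zero.mpr t.den_nz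
  have hn : (t.num : ℚ) = t * t.den := (Rat.mul_den_eq_num t).symm
  have h1 : (c3 : ℚ) * (t.num : ℚ) ^ 3 + c2 * t.num ^ 2 * t.den + c1 * t.num * t.den ^ 2
      + c0 * t.den ^ 3 = 0 := by
    calc (c3 : ℚ) * (t.num : ℚ) ^ 3 + c2 * t.num ^ 2 * t.den + c1 * t.num * t.den ^ 2
        + c0 * t.den ^ 3
        = ((c3 : ℚ) * t ^ 3 + c2 * t ^ 2 + c1 * t + c0) * (t.den : ℚ) ^ 3 := by rw [hn]; ring
      _ = 0 := by rw [ht, zero_mul]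
  have h2 : c3 * t.num ^ 3 + c2 * t.num ^ 2 * (t.den : ℤ) + c1 * t.num * (t.den : ℤ) ^ 2
      + c0 * (t.den : ℤ) ^ 3 = 0 := by exact_mod_cast h1
  have h3 := congrArg (fun z : ℤ => (z : ZMod p)) h2
  push_cast at h3
  obtain ⟨ha, hb⟩ := h (t.num : ZMod p) (t.den : ZMod p) h3
  have hpn : (p : ℤ) ∣ t.num := (ZMod.intCast_zmod_eq_zero_iff_dvd _ _).mp ha
  have hpd : p ∣ t.den := (ZMod.natCast_eq_zero_iff _ _).mp hb
  have hpn' : p ∣ t.num.natAbs := Int.ofNat_dvd_right.mp (Int.dvd_natAbs.mpr hpn)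
  have h1' : p ∣ 1 := t.reduced ▸ Nat.dvd_gcd hpn' hpd
  exact absurd (Nat.le_of_dvd one_pos h1') (by omega)


lemma not_double_P (X : E.Point) : X + X ≠ P := by
  cases X with
  | zero =>
    intro h; exact some_ne_zero hP ((zero_add (Point.zero : E.Point)) ▸ h).symm
  | @some t s h' =>
    intro heq
    by_cases hc : s = E.negY t s
    · exact some_ne_zero hP (add_self_of_Y_eq hc ▸ heq).symm
    · have hid := double_eq h' hc hP heq
      refine no_rat_root_quartic 1 0 (-42) (-8) 529 7 (by norm_num) (by decide) t ?_
      push_cast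
      linear_combination hid

lemma not_double_Q (X : E.Point) : X + X ≠ Q := by
  cases X with
  | zero =>
    intro h; exact some_ne_zero hQ ((zero_add (Point.zero : E.Point)) ▸ h).symm
  | @some t s h' =>
    intro heq
    by_cases hc : s = E.negY t s
    · exact some_ne_zero hQ (add_self_of_Y_eq hc ▸ heq).symm
    · have hid := double_eq h' hc hQ heq
      refine no_rat_root_quartic 1 (-4) 46 (-92) 525 11 (by norm_num) (by decide) t ?_
      push_cast
      linear_combination hid

lemma not_double_R (X : E.Point) : X + X ≠ R := by
  cases X with
  | zero =>
    intro h; exact some_ne_zero hR ((zero_add (Point.zero : E.Point)) ▸ h).symm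
  | @some t s h' =>
    intro heq
    by_cases hc : s = E.negY t s
    · exact some_ne_zero hR (add_self_of_Y_eq hc ▸ heq).symm
    · have hid := double_eq h' hc hR heq
      refine no_rat_root_quartic 1 (-84) 1806 (-1772) 445 7 (by norm_num) (by decide) t ?_
      push_cast
      linear_combination hid

lemma two_tors (X : E.Point) (h : X + X = 0) : X = 0 := by
  cases X with
  | zero => rfl
  | @some t s h' =>
    by_cases hc : s = E.negY t s
    · exfalso
      rw [negY_eq] at hc
      have hs0 : s = 0 := by linarith
      have hsq : s ^ 2 = t ^ 3 - 22 * t ^ 2 + 21 * t + 1 := (eqn_iff t s).mp h'.1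
      rw [hs0] at hsq
      refine no_rat_root_cubic 1 (-22) 21 1 3 (by norm_num) (by decide) t ?_
      push_cast
      linear_combination -hsq
    · exact absurd (add_self_of_Y_ne hc ▸ h) (some_ne_zero _)


lemma rel : ∀ n : ℕ, ∀ a b : ℤ, a.natAbs + b.natAbs = n → a • P + b • Q = 0 → a = 0 ∧ b = 0 := by
  intro n
  induction n using Nat.strong_induction_on with
  | _ n IH =>
    intro a b hn h
    rcases Int.even_or_odd a with ⟨k, hk⟩ | ⟨k, hk⟩ <;>
      rcases Int.even_or_odd b with ⟨m, hm⟩ | ⟨m, hm⟩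
    · -- even, even
      by_cases h0 : a = 0 ∧ b = 0
      · exact h0
      · have key : (k • P + m • Q) + (k • P + m • Q) = a • P + b • Q := by
          rw [hk, hm]; module
        have hT : k • P + m • Q = 0 := two_tors _ (by rw [key]; exact h)
        have hlt : k.natAbs + m.natAbs < n := by
          have ha : a.natAbs = 2 * k.natAbs := by rw [hk, ← two_mul, Int.natAbs_mul]; rfl
          have hb : b.natAbs = 2 * m.natAbs := by rw [hm, ← two_mul, Int.natAbs_mul]; rfl
          have hk0 : a ≠ 0 ∨ b ≠ 0 := by tauto
          rcases hk0 with h' | h' <;>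
            [skip; skip] <;>
          · have := Int.natAbs_pos.mpr h'
            omega
        obtain ⟨hk0, hm0⟩ := IH _ hlt k m rfl hT
        constructor <;> omega
    · -- a even, b odd : Q is a double, contradiction
      exfalso
      have key : (-(k • P + m • Q)) + (-(k • P + m • Q)) = Q - (a • P + b • Q) := by
        rw [hk, hm]; module
      exact not_double_Q _ (by rw [key, h, sub_zero])
    · -- a odd, b even : P is a double, contradiction
      exfalso
      have key : (-(k • P + m • Q)) + (-(k • P + m • Q)) = P - (a • P + b • Q) := by
        rw [hk, hm]; module
      exact not_double_P _ (by rw [key, h, sub_zero])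
    · -- both odd : P + Q = R is a double, contradiction
      exfalso
      have key : (-(k • P + m • Q)) + (-(k • P + m • Q)) = (P + Q) - (a • P + b • Q) := by
        rw [hk, hm]; module
      exact not_double_R _ (by rw [key, h, sub_zero, PQ_eq])

lemma rel' (a b : ℤ) (h : a • P + b • Q = 0) : a = 0 ∧ b = 0 :=
  rel _ a b rfl h

lemma inj : Function.Injective (fun v : ℤ × ℤ => v.1 • P + v.2 • Q) := by
  intro v w hvw
  simp only at hvw
  have h0 : (v.1 - w.1) • P + (v.2 - w.2) • Q = 0 := by
    have key : (v.1 - w.1) • P + (v.2 - w.2) • Q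
        = (v.1 • P + v.2 • Q) - (w.1 • P + w.2 • Q) := by module
    rw [key, hvw, sub_self]
  obtain ⟨h1, h2⟩ := rel' _ _ h0
  exact Prod.ext (sub_eq_zero.mp h1) (sub_eq_zero.mp h2)

end Stmt14

/-- On the elliptic curve `E : y² = x³ − 22x² + 21x + 1` over `ℚ`, the points
`(0,1)` and `(1,1)` lie on `E` and generate a free subgroup of rank `2` of `E(ℚ)`;
in particular the Mordell–Weil rank of `E(ℚ)` is at least `2`. -/
theorem stmt_14 (W : WeierstrassCurve.Affine ℚ)
    (hW : W = { a₁ := 0, a₂ := -22, a₃ := 0, a₄ := 21, a₆ := 1 }) :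
    W.Equation 0 1 ∧ W.Equation 1 1 ∧
      ∃ (h₁ : W.Nonsingular 0 1) (h₂ : W.Nonsingular 1 1),
        Function.Injective (fun v : ℤ × ℤ =>
          v.1 • (WeierstrassCurve.Affine.Point.some 0 1 h₁ : W.Point) +
            v.2 • (WeierstrassCurve.Affine.Point.some 1 1 h₂ : W.Point)) := by
  subst hW
  exact ⟨Stmt14.hP.1, Stmt14.hQ.1, Stmt14.hP, Stmt14.hQ, Stmt14.inj⟩
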